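/- Let N_1, N_2 be finitely generated free E^+ = L ⊗ O_L[[X]]-submodules of a common module, both stable under Γ with Γ acting trivially modulo X through a finite quotient, and suppose X^r N_1 ⊆ N_2 for some r ≥ 1. If an open subgroup of Γ acts by the character χ^r on X^r N_1 / X^{r+1} N_1 and trivially on N_2 / X N_2, then already X^{r−1} N_1 ⊆ N_2; consequently N_1 ⊆ N_2 (and by symmetry N_1 = N_2 if also X^s N_2 ⊆ N_1 for some s). This is the uniqueness argument for Wach modules. -/
import Mathlib

/-- One descent step: if `x^t A ⊆ B` with `t ≥ 1`, then `x^(t-1) A ⊆ B`. -/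
theorem wach_step
    (R : Type*) [CommRing R] (M : Type*) [AddCommGroup M] [Module R M]
    (x u : R)
    (hxreg : ∀ m : M, x • m = 0 → m = 0)
    (hu : ∀ s : ℕ, 1 ≤ s → IsUnit (u ^ s - 1))
    (A B : Submodule R M)
    (g : M → M)
    (hχ : ∀ s : ℕ, 1 ≤ s → ∀ m ∈ A, ∃ m' ∈ A,
      g (x ^ s • m) - u ^ s • (x ^ s • m) = x ^ (s + 1) • m')
    (htrivB : ∀ m ∈ B, ∃ m' ∈ B, g m - m = x • m')
    (t : ℕ) (ht : 1 ≤ t)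
    (h : ∀ m ∈ A, x ^ t • m ∈ B) :
    ∀ m ∈ A, x ^ (t - 1) • m ∈ B := by
  intro m hm
  obtain ⟨m', hm', heq1⟩ := hχ t ht m hm
  obtain ⟨n', hn', heq2⟩ := htrivB (x ^ t • m) (h m hm)
  obtain ⟨c, hc⟩ := hu t ht
  have hb : (↑c⁻¹ : R) * (u ^ t - 1) = 1 := by rw [← hc]; exact c.inv_mul
  have key : (u ^ t - 1) • (x ^ t • m) = x • (n' - x ^ t • m') := by
    have h3 : x ^ (t + 1) • m' = x • (x ^ t • m') := by
      rw [pow_succ', mul_smul]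
    rw [sub_smul, one_smul, smul_sub, ← h3, ← heq1, ← heq2]
    abel
  have hxt : x ^ t • m = x • (x ^ (t - 1) • m) := by
    rw [← mul_smul, ← pow_succ', Nat.sub_add_cancel ht]
  have hzero : x ^ (t - 1) • m - (↑c⁻¹ : R) • (n' - x ^ t • m') = 0 := by
    apply hxreg
    rw [smul_sub, ← hxt, smul_comm x (↑c⁻¹ : R), ← key, ← mul_smul, hb, one_smul,
      sub_self]
  rw [sub_eq_zero] at hzero
  rw [hzero]
  exact B.smul_mem _ (B.sub_mem hn' (h m' hm'))

theorem wach_descent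
    (R : Type*) [CommRing R] (M : Type*) [AddCommGroup M] [Module R M]
    (x u : R)
    (hxreg : ∀ m : M, x • m = 0 → m = 0)
    (hu : ∀ s : ℕ, 1 ≤ s → IsUnit (u ^ s - 1))
    (A B : Submodule R M)
    (g : M → M)
    (hχ : ∀ s : ℕ, 1 ≤ s → ∀ m ∈ A, ∃ m' ∈ A,
      g (x ^ s • m) - u ^ s • (x ^ s • m) = x ^ (s + 1) • m')
    (htrivB : ∀ m ∈ B, ∃ m' ∈ B, g m - m = x • m') :
    ∀ t : ℕ, (∀ m ∈ A, x ^ t • m ∈ B) → ∀ m ∈ A, m ∈ B := by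
  intro t
  induction t with
  | zero => intro h m hm; simpa using h m hm
  | succ n ih =>
    intro h m hm
    have := wach_step R M x u hxreg hu A B g hχ htrivB (n + 1) (Nat.succ_le_succ n.zero_le) h
    simpa using ih (by simpa using this) m hm

/-- The uniqueness argument for Wach modules.  Let `N₁, N₂` be submodules of a module
`M` over a ring `R` (playing the role of finitely generated free `E^+`-submodules of a
common module), `x ∈ R` (playing `X`), `g : M → M` the action of an element `γ` of an
open subgroup of `Γ`, and `u ∈ R` the scalar `χ(γ)`, with `u^s − 1` invertible, `x`
regular on `M`, `γ` acting by `χ^s` on `x^s Nᵢ / x^{s+1} Nᵢ` and trivially on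
`Nᵢ / x Nᵢ`.  If `x^r N₁ ⊆ N₂` for some `r ≥ 1`, then already `x^{r−1} N₁ ⊆ N₂`;
consequently `N₁ ⊆ N₂` (and, by symmetry, `N₁ = N₂` if also `x^s N₂ ⊆ N₁` for some
`s`). -/
theorem wach_module_uniqueness
    (R : Type*) [CommRing R] (M : Type*) [AddCommGroup M] [Module R M]
    (x u : R)
    (hxreg : ∀ m : M, x • m = 0 → m = 0)
    (hu : ∀ s : ℕ, 1 ≤ s → IsUnit (u ^ s - 1))
    (N₁ N₂ : Submodule R M)
    (g : M → M)
    (hχ₁ : ∀ s : ℕ, 1 ≤ s → ∀ m ∈ N₁, ∃ m' ∈ N₁,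
      g (x ^ s • m) - u ^ s • (x ^ s • m) = x ^ (s + 1) • m')
    (hχ₂ : ∀ s : ℕ, 1 ≤ s → ∀ m ∈ N₂, ∃ m' ∈ N₂,
      g (x ^ s • m) - u ^ s • (x ^ s • m) = x ^ (s + 1) • m')
    (htriv₁ : ∀ m ∈ N₁, ∃ m' ∈ N₁, g m - m = x • m')
    (htriv₂ : ∀ m ∈ N₂, ∃ m' ∈ N₂, g m - m = x • m')
    (r : ℕ) (hr : 1 ≤ r)
    (h1 : ∀ m ∈ N₁, x ^ r • m ∈ N₂) :
    (∀ m ∈ N₁, x ^ (r - 1) • m ∈ N₂) ∧ (∀ m ∈ N₁, m ∈ N₂) ∧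
      (∀ s : ℕ, 1 ≤ s → (∀ m ∈ N₂, x ^ s • m ∈ N₁) → N₁ = N₂) := by
  refine ⟨wach_step R M x u hxreg hu N₁ N₂ g hχ₁ htriv₂ r hr h1,
    wach_descent R M x u hxreg hu N₁ N₂ g hχ₁ htriv₂ r h1, ?_⟩
  intro s hs h2
  apply le_antisymm
  · exact fun m hm => wach_descent R M x u hxreg hu N₁ N₂ g hχ₁ htriv₂ r h1 m hm
  · exact fun m hm => wach_descent R M x u hxreg hu N₂ N₁ g hχ₂ htriv₁ s h2 m hm
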